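/- Let ‖·‖₊ be a norm on ℝ^d such that the function N(x) = ‖x‖₊² is differentiable and satisfies N(x + y) ≤ N(x) + ⟨∇N(x), y⟩ + κ₊·N(y) for all x, y ∈ ℝ^d, for some constant κ₊ ≥ 1. Let X₁, …, X_n be independent random vectors in ℝ^d with E[X_i] = 0 and E[‖X_i‖₊²] < ∞ for each i. Then E[‖Σ_{i=1}^n X_i‖₊²] ≤ κ₊ · Σ_{i=1}^n E[‖X_i‖₊²]. -/

import Mathlib

set_option maxHeartbeats 1000000


open Set MeasureTheory

/-- `Nm` is a norm on `ℝ^d`. -/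
def IsNorm {d : ℕ} (Nm : EuclideanSpace ℝ (Fin d) → ℝ) : Prop :=
  (∀ x, Nm x = 0 ↔ x = 0) ∧ (∀ (a : ℝ) (x), Nm (a • x) = |a| * Nm x) ∧
    ∀ x y, Nm (x + y) ≤ Nm x + Nm y

/-- If the squared norm `N = ‖·‖₊²` is differentiable with gradient `gN` and satisfies the
`κ₊`-smoothness inequality `N(x+y) ≤ N(x) + ⟨∇N(x), y⟩ + κ₊ N(y)`, then for independent,
mean-zero, square-integrable random vectors `X₁, …, X_n`,
`E[‖Σᵢ Xᵢ‖₊²] ≤ κ₊ Σᵢ E[‖Xᵢ‖₊²]`. -/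
theorem stmt_15 (d n : ℕ) (Nm : EuclideanSpace ℝ (Fin d) → ℝ) (hNm : IsNorm Nm)
    (κ : ℝ) (hκ : 1 ≤ κ)
    (gN : EuclideanSpace ℝ (Fin d) → EuclideanSpace ℝ (Fin d))
    (hdiff : ∀ x, HasGradientAt (fun z => Nm z ^ 2) (gN x) x)
    (hsmooth : ∀ x y, Nm (x + y) ^ 2 ≤ Nm x ^ 2 + (inner ℝ (gN x) y : ℝ) + κ * Nm y ^ 2)
    (Ω : Type) [MeasurableSpace Ω] (μ : Measure Ω) [IsProbabilityMeasure μ]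
    (X : Fin n → Ω → EuclideanSpace ℝ (Fin d))
    (hmeas : ∀ i, Measurable (X i))
    (hindep : ProbabilityTheory.iIndepFun X μ)
    (hint : ∀ i, Integrable (X i) μ)
    (hmean : ∀ i, ∫ ω, X i ω ∂μ = 0)
    (hL2 : ∀ i, Integrable (fun ω => Nm (X i ω) ^ 2) μ) :
    ∫ ω, Nm (∑ i, X i ω) ^ 2 ∂μ ≤ κ * ∑ i, ∫ ω, Nm (X i ω) ^ 2 ∂μ := by
  classical
  obtain ⟨h0, hsmul, htri⟩ := hNm
  have hN0 : Nm 0 = 0 := (h0 0).mpr rfl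
  have hNneg : ∀ x : EuclideanSpace ℝ (Fin d), 0 ≤ Nm x := by
    intro x
    have h1 := htri x (-x)
    have h2 : Nm (-x) = Nm x := by
      have := hsmul (-1) x; simpa using this
    have h3 : Nm (x + -x) = 0 := by simpa using hN0
    linarith
  -- `Nm` is dominated by the Euclidean norm
  have habs : ∀ (x : EuclideanSpace ℝ (Fin d)) (j : Fin d), |x j| ≤ ‖x‖ := by
    intro x j
    have h := abs_real_inner_le_norm (EuclideanSpace.single j (1 : ℝ)) x
    simpa [EuclideanSpace.inner_single_left, EuclideanSpace.norm_single] using h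
  set C : ℝ := ∑ j : Fin d, Nm (EuclideanSpace.single j (1 : ℝ)) with hCdef
  have hNle : ∀ x : EuclideanSpace ℝ (Fin d), Nm x ≤ C * ‖x‖ := by
    intro x
    have hx : x = ∑ j : Fin d, x j • EuclideanSpace.single j (1 : ℝ) := by
      have := (EuclideanSpace.basisFun (Fin d) ℝ).sum_repr x
      simpa [EuclideanSpace.basisFun_apply, EuclideanSpace.basisFun_repr] using this.symm
    calc Nm x = Nm (∑ j : Fin d, x j • EuclideanSpace.single j (1 : ℝ)) := by rw [← hx]
      _ ≤ ∑ j : Fin d, Nm (x j • EuclideanSpace.single j (1 : ℝ)) :=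
          Finset.le_sum_of_subadditive Nm hN0.le htri _ _
      _ = ∑ j : Fin d, |x j| * Nm (EuclideanSpace.single j (1 : ℝ)) := by
          simp [hsmul]
      _ ≤ ∑ j : Fin d, ‖x‖ * Nm (EuclideanSpace.single j (1 : ℝ)) := by
          apply Finset.sum_le_sum
          intro j _
          exact mul_le_mul_of_nonneg_right (habs x j) (hNneg _)
      _ = C * ‖x‖ := by rw [hCdef, Finset.sum_mul]; simp [mul_comm]
  have hCnonneg : 0 ≤ C := Finset.sum_nonneg fun j _ => hNneg _
  have hNdiff : ∀ x y : EuclideanSpace ℝ (Fin d), Nm x - Nm y ≤ Nm (x - y) := by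
    intro x y
    have := htri (x - y) y
    simpa using this
  have hNcont : Continuous Nm := by
    apply LipschitzWith.continuous (K := Real.toNNReal C)
    apply LipschitzWith.of_dist_le_mul
    intro x y
    rw [Real.dist_eq, Real.coe_toNNReal _ hCnonneg, dist_eq_norm]
    rw [abs_sub_le_iff]
    constructor
    · exact le_trans (hNdiff x y) (hNle _)
    · have := le_trans (hNdiff y x) (hNle (y - x))
      simpa [norm_sub_rev] using this
  have hNmeas : Measurable Nm := hNcont.measurable
  -- gradient bound
  have hgle : ∀ x y : EuclideanSpace ℝ (Fin d), (inner ℝ (gN x) y : ℝ) ≤ 2 * Nm x * Nm y := by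
    intro x y
    by_contra hcon
    push_neg at hcon
    set ε : ℝ := (inner ℝ (gN x) y : ℝ) - 2 * Nm x * Nm y with hεdef
    have hε : 0 < ε := by linarith
    set t : ℝ := ε / (κ * Nm y ^ 2 + ε) with htdef
    have hden : 0 < κ * Nm y ^ 2 + ε := by nlinarith [sq_nonneg (Nm y), hNneg y]
    have ht : 0 < t := div_pos hε hden
    -- smoothness at `x` with increment `-t • y`
    have h1 := hsmooth x ((-t) • y)
    have h2 : Nm ((-t) • y) = t * Nm y := by
      rw [hsmul, abs_neg, abs_of_pos ht]
    have h3 : (inner ℝ (gN x) ((-t) • y) : ℝ) = -t * (inner ℝ (gN x) y : ℝ) := by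
      rw [real_inner_smul_right]
    -- lower bound on Nm (x + (-t)•y)
    have h4 : Nm x - t * Nm y ≤ Nm (x + (-t) • y) := by
      have := hNdiff x ((t : ℝ) • y)
      have h5 : Nm ((t : ℝ) • y) = t * Nm y := by rw [hsmul, abs_of_pos ht]
      have h6 : x - (t : ℝ) • y = x + (-t) • y := by
        rw [neg_smul, sub_eq_add_neg]
      rw [h6, h5] at this
      linarith
    have hxy : 0 ≤ Nm (x + (-t) • y) := hNneg _
    have hkey : t * (inner ℝ (gN x) y : ℝ) ≤ 2 * t * Nm x * Nm y + κ * t ^ 2 * Nm y ^ 2 := by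
      rw [h2, h3] at h1
      rcases le_or_gt (t * Nm y) (Nm x) with hc | hc
      · nlinarith [h4, hxy, sq_nonneg (Nm x - t * Nm y)]
      · nlinarith [hNneg x, hNneg y, hxy, sq_nonneg (Nm (x + (-t) • y))]
    -- divide by t
    have hfin : (inner ℝ (gN x) y : ℝ) ≤ 2 * Nm x * Nm y + κ * t * Nm y ^ 2 := by
      have h8 : t * (inner ℝ (gN x) y : ℝ) ≤ t * (2 * Nm x * Nm y + κ * t * Nm y ^ 2) := by
        nlinarith [hkey]
      exact le_of_mul_le_mul_left h8 ht
    have hlt : κ * t * Nm y ^ 2 < ε := by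
      have h7 : t * (κ * Nm y ^ 2 + ε) = ε := div_mul_cancel₀ ε (ne_of_gt hden)
      nlinarith [mul_pos ht hε]
    have : ε ≤ κ * t * Nm y ^ 2 := by
      rw [hεdef]; linarith [hfin]
    linarith
  have hgabs : ∀ x y : EuclideanSpace ℝ (Fin d), |(inner ℝ (gN x) y : ℝ)| ≤ 2 * Nm x * Nm y := by
    intro x y
    rw [abs_le]
    refine ⟨?_, hgle x y⟩
    have := hgle x (-y)
    have h2 : Nm (-y) = Nm y := by have := hsmul (-1) y; simpa using this
    rw [inner_neg_right, h2] at this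
    linarith
  -- measurability of gradient coordinates
  have hmg : ∀ v : EuclideanSpace ℝ (Fin d), Measurable (fun x : EuclideanSpace ℝ (Fin d) => (inner ℝ (gN x) v : ℝ)) := by
    intro v
    have h := measurable_fderiv_apply_const ℝ (fun z : EuclideanSpace ℝ (Fin d) => Nm z ^ 2) v
    have heq : (fun x : EuclideanSpace ℝ (Fin d) => fderiv ℝ (fun z : EuclideanSpace ℝ (Fin d) => Nm z ^ 2) x v)
        = fun x : EuclideanSpace ℝ (Fin d) => (inner ℝ (gN x) v : ℝ) := by
      funext x
      rw [((hdiff x).hasFDerivAt).fderiv]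
      simp [InnerProductSpace.toDual_apply_apply]
    rwa [heq] at h
  -- main induction
  have key : ∀ s : Finset (Fin n),
      ∫ ω, Nm (∑ i ∈ s, X i ω) ^ 2 ∂μ ≤ κ * ∑ i ∈ s, ∫ ω, Nm (X i ω) ^ 2 ∂μ := by
    intro s
    induction s using Finset.cons_induction with
    | empty => simp [hN0]
    | cons a s ha ih =>
      set S : Ω → EuclideanSpace ℝ (Fin d) := fun ω => ∑ i ∈ s, X i ω with hSdef
      have hSm : Measurable S := by
        apply Finset.measurable_sum
        intro i _
        exact hmeas i
      -- integrability of Nm (S ω) ^ 2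
      have hXLp : ∀ i, MemLp (fun ω => Nm (X i ω)) 2 μ := by
        intro i
        refine (memLp_two_iff_integrable_sq ?_).mpr (hL2 i)
        exact (hNmeas.comp (hmeas i)).aestronglyMeasurable
      have hFLp : MemLp (fun ω => ∑ i ∈ s, Nm (X i ω)) 2 μ :=
        memLp_finset_sum s fun i _ => hXLp i
      have hF2int : Integrable (fun ω => (∑ i ∈ s, Nm (X i ω)) ^ 2) μ :=
        (memLp_two_iff_integrable_sq hFLp.aestronglyMeasurable).mp hFLp
      have hSbound : ∀ ω, Nm (S ω) ≤ ∑ i ∈ s, Nm (X i ω) := fun ω =>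
        Finset.le_sum_of_subadditive Nm hN0.le htri _ _
      have hS2int : Integrable (fun ω => Nm (S ω) ^ 2) μ := by
        refine hF2int.mono ((hNmeas.comp hSm).pow_const 2).aestronglyMeasurable ?_
        filter_upwards with ω
        have h1 := hSbound ω
        have h2 := hNneg (S ω)
        have h3 : (0:ℝ) ≤ ∑ i ∈ s, Nm (X i ω) := le_trans h2 h1
        rw [Real.norm_eq_abs, Real.norm_eq_abs, abs_of_nonneg (by positivity),
          abs_of_nonneg (by positivity)]
        nlinarith
      have hSint1 : Integrable (fun ω => Nm (S ω)) μ := by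
        refine ((hS2int.add (integrable_const 1)).mono
          (hNmeas.comp hSm).aestronglyMeasurable ?_)
        filter_upwards with ω
        have h2 := hNneg (S ω)
        rw [Real.norm_eq_abs, Real.norm_eq_abs, abs_of_nonneg h2]
        have : Nm (S ω) ≤ Nm (S ω) ^ 2 + 1 := by nlinarith
        exact le_trans this (le_abs_self _)
      -- independence of S and X a
      have hindepSA : ProbabilityTheory.IndepFun S (X a) μ := by
        have h := hindep.indepFun_finset_sum_of_notMem hmeas ha
        have heq : (∑ j ∈ s, X j) = S := by
          funext ω; simp [hSdef]
        rwa [heq] at h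
      -- coordinate decomposition of the cross term
      have hrep : ∀ ω, (inner ℝ (gN (S ω)) (X a ω) : ℝ)
          = ∑ j : Fin d, (inner ℝ (gN (S ω)) (EuclideanSpace.single j (1:ℝ)) : ℝ) * X a ω j := by
        intro ω
        simp only [EuclideanSpace.inner_single_right, map_one, one_mul]
        rw [PiLp.inner_apply]
        simp [RCLike.inner_apply, mul_comm]
      -- each coordinate product is integrable with zero integral
      have hGint : ∀ j : Fin d,
          Integrable (fun ω => (inner ℝ (gN (S ω)) (EuclideanSpace.single j (1:ℝ)) : ℝ)) μ := by
        intro j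
        refine ((hSint1.const_mul (2 * Nm (EuclideanSpace.single j (1:ℝ)))).mono
          ((hmg _).comp hSm).aestronglyMeasurable ?_)
        filter_upwards with ω
        rw [Real.norm_eq_abs, Real.norm_eq_abs]
        refine le_trans (hgabs _ _) ?_
        have h1 := hNneg (S ω)
        have h2 := hNneg (EuclideanSpace.single j (1:ℝ))
        rw [abs_of_nonneg (mul_nonneg (mul_nonneg (by norm_num) h2) h1)]
        exact le_of_eq (by ring)
      have hXjint : ∀ j : Fin d, Integrable (fun ω => X a ω j) μ := by
        intro j
        have := (EuclideanSpace.proj (𝕜 := ℝ) j).integrable_comp (hint a)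
        simpa using this
      have hXjmean : ∀ j : Fin d, ∫ ω, X a ω j ∂μ = 0 := by
        intro j
        have := (EuclideanSpace.proj (𝕜 := ℝ) j).integral_comp_comm (hint a)
        simp only [hmean a] at this
        simpa using this
      have hindepj : ∀ j : Fin d, ProbabilityTheory.IndepFun
          (fun ω => (inner ℝ (gN (S ω)) (EuclideanSpace.single j (1:ℝ)) : ℝ))
          (fun ω => X a ω j) μ := by
        intro j
        exact hindepSA.comp (hmg _) (EuclideanSpace.proj (𝕜 := ℝ) j).continuous.measurable
      have hprodint : ∀ j : Fin d, Integrable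
          (fun ω => (inner ℝ (gN (S ω)) (EuclideanSpace.single j (1:ℝ)) : ℝ) * X a ω j) μ := by
        intro j
        exact (hindepj j).integrable_mul (hGint j) (hXjint j)
      have hprodzero : ∀ j : Fin d,
          ∫ ω, (inner ℝ (gN (S ω)) (EuclideanSpace.single j (1:ℝ)) : ℝ) * X a ω j ∂μ = 0 := by
        intro j
        have := (hindepj j).integral_fun_mul_eq_mul_integral
          ((hmg _).comp hSm).aestronglyMeasurable
          (hXjint j).aestronglyMeasurable
        calc ∫ ω, (inner ℝ (gN (S ω)) (EuclideanSpace.single j (1:ℝ)) : ℝ) * X a ω j ∂μ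
            = (∫ ω, (inner ℝ (gN (S ω)) (EuclideanSpace.single j (1:ℝ)) : ℝ) ∂μ)
              * ∫ ω, X a ω j ∂μ := this
          _ = 0 := by rw [hXjmean j, mul_zero]
      have hcrossint : Integrable (fun ω => (inner ℝ (gN (S ω)) (X a ω) : ℝ)) μ := by
        have : Integrable (fun ω => ∑ j : Fin d,
            (inner ℝ (gN (S ω)) (EuclideanSpace.single j (1:ℝ)) : ℝ) * X a ω j) μ :=
          integrable_finset_sum _ fun j _ => hprodint j
        exact this.congr (by filter_upwards with ω using (hrep ω).symm)
      have hcross : ∫ ω, (inner ℝ (gN (S ω)) (X a ω) : ℝ) ∂μ = 0 := by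
        rw [integral_congr_ae (by filter_upwards with ω using hrep ω)]
        rw [integral_finset_sum _ fun j _ => hprodint j]
        exact Finset.sum_eq_zero fun j _ => hprodzero j
      -- apply smoothness pointwise and integrate
      have hRHSint : Integrable (fun ω => Nm (S ω) ^ 2
          + (inner ℝ (gN (S ω)) (X a ω) : ℝ) + κ * Nm (X a ω) ^ 2) μ :=
        (hS2int.add hcrossint).add ((hL2 a).const_mul κ)
      have hmono : ∫ ω, Nm (S ω + X a ω) ^ 2 ∂μ ≤ ∫ ω, (Nm (S ω) ^ 2
          + (inner ℝ (gN (S ω)) (X a ω) : ℝ) + κ * Nm (X a ω) ^ 2) ∂μ := by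
        refine integral_mono_of_nonneg ?_ hRHSint ?_
        · filter_upwards with ω using sq_nonneg _
        · filter_upwards with ω using hsmooth (S ω) (X a ω)
      have hAB : Integrable (fun ω => Nm (S ω) ^ 2
          + (inner ℝ (gN (S ω)) (X a ω) : ℝ)) μ := hS2int.add hcrossint
      rw [integral_add hAB ((hL2 a).const_mul κ),
        integral_add hS2int hcrossint, hcross, integral_const_mul] at hmono
      have hsumrw : ∀ ω, (∑ i ∈ Finset.cons a s ha, X i ω) = S ω + X a ω := by
        intro ω
        rw [Finset.sum_cons, add_comm]
      calc ∫ ω, Nm (∑ i ∈ Finset.cons a s ha, X i ω) ^ 2 ∂μ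
          = ∫ ω, Nm (S ω + X a ω) ^ 2 ∂μ := by
            apply integral_congr_ae; filter_upwards with ω; rw [hsumrw ω]
        _ ≤ ∫ ω, Nm (S ω) ^ 2 ∂μ + 0 + κ * ∫ ω, Nm (X a ω) ^ 2 ∂μ := hmono
        _ ≤ κ * ∑ i ∈ s, ∫ ω, Nm (X i ω) ^ 2 ∂μ + κ * ∫ ω, Nm (X a ω) ^ 2 ∂μ := by
            linarith [ih]
        _ = κ * ∑ i ∈ Finset.cons a s ha, ∫ ω, Nm (X i ω) ^ 2 ∂μ := by
            rw [Finset.sum_cons]; ring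
  simpa using key Finset.univ
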